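/- Let (C, Ω, ◁) be a left triangulated category and M a rigid subcategory (Hom_C(ΩM, M') = 0 for all M, M' ∈ M) such that Ω restricted to M is fully faithful. Then for any left triangle ΩM1 →f X →g M0 →h M1 with M0, M1 ∈ M, the sequence Hom_M(−, M0) →Hom(−,h) Hom_M(−, M1) → H(X) → 0 is exact in Mod M, where H(X) = Hom_C(Ω(−), X)|_M. In particular H(X) is a finitely presented M-module. -/

import Mathlib

open CategoryTheory CategoryTheory.Limits Opposite ZeroObject

universe v u

/-- A left triangulated category `(C, Ω, ◁)`: an additive category with an additive
loop endofunctor `Ω` and a class of left triangles `ΩZ ⟶ X ⟶ Y ⟶ Z` satisfying the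
axioms (LTR0)–(LTR4), dual to the right triangulated axioms. -/
structure LeftTriangulated (C : Type u) [Category.{v} C] [Preadditive C]
    [HasZeroObject C] where
  /-- the loop (shift) functor `Ω` -/
  loop : C ⥤ C
  loop_additive : loop.Additive
  /-- the class of left triangles -/
  IsTri : ∀ ⦃X Y Z : C⦄, (loop.obj Z ⟶ X) → (X ⟶ Y) → (Y ⟶ Z) → Prop
  /-- (LTR0): left triangles are closed under isomorphism of sequences -/
  ltr0 : ∀ ⦃X Y Z X' Y' Z' : C⦄ (x : loop.obj Z ⟶ X) (y : X ⟶ Y) (z : Y ⟶ Z)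
      (x' : loop.obj Z' ⟶ X') (y' : X' ⟶ Y') (z' : Y' ⟶ Z')
      (f : X ≅ X') (g : Y ≅ Y') (h : Z ≅ Z'),
      IsTri x y z → x ≫ f.hom = loop.map h.hom ≫ x' → y ≫ g.hom = f.hom ≫ y' →
      z ≫ h.hom = g.hom ≫ z' → IsTri x' y' z'
  /-- (LTR1a): `Ω0 ⟶ X = X ⟶ 0` is a left triangle -/
  ltr1_id : ∀ X : C, IsTri (0 : loop.obj (0 : C) ⟶ X) (𝟙 X) 0
  /-- (LTR1b): every morphism embeds in a left triangle -/
  ltr1_ex : ∀ ⦃Y Z : C⦄ (z : Y ⟶ Z), ∃ (X : C) (x : loop.obj Z ⟶ X) (y : X ⟶ Y),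
      IsTri x y z
  /-- (LTR2): rotation -/
  ltr2 : ∀ ⦃X Y Z : C⦄ (x : loop.obj Z ⟶ X) (y : X ⟶ Y) (z : Y ⟶ Z),
      IsTri x y z → IsTri (-loop.map z) x y
  /-- (LTR3): morphisms of left triangles -/
  ltr3 : ∀ ⦃X Y Z X' Y' Z' : C⦄ (x : loop.obj Z ⟶ X) (y : X ⟶ Y) (z : Y ⟶ Z)
      (x' : loop.obj Z' ⟶ X') (y' : X' ⟶ Y') (z' : Y' ⟶ Z')
      (g : Y ⟶ Y') (h : Z ⟶ Z'), IsTri x y z → IsTri x' y' z' →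
      z ≫ h = g ≫ z' →
      ∃ f : X ⟶ X', x ≫ f = loop.map h ≫ x' ∧ y ≫ g = f ≫ y'
  /-- (LTR4): the octahedron axiom -/
  ltr4 : ∀ ⦃X Y Z Y'' Z' : C⦄ (x : loop.obj Z ⟶ X) (y : X ⟶ Y) (z : Y ⟶ Z)
      (x' : loop.obj Z' ⟶ Y'') (y' : Y'' ⟶ Z) (z' : Z ⟶ Z'),
      IsTri x y z → IsTri x' y' z' →
      ∃ (X' : C) (u : loop.obj Z' ⟶ X') (v : X' ⟶ Y) (g : X ⟶ X') (h : X' ⟶ Y''),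
        IsTri u v (z ≫ z') ∧ IsTri (loop.map y' ≫ x) g h ∧
        g ≫ v = y ∧ u ≫ h = x' ∧ h ≫ y' = v ≫ z
universe v' u' v'' u''

variable {C : Type u} [Category.{v} C] [Preadditive C] [HasZeroObject C]

/-- The full subcategory on a set of objects. -/
abbrev Subcat (𝓜 : Set C) := ObjectProperty.FullSubcategory (fun X : C => X ∈ 𝓜)

/-- The functor `X ↦ Hom_C(−, X)|_𝓜`, the restricted preadditive Yoneda embedding. -/
def resYoneda (𝓜 : Set C) : C ⥤ ((Subcat 𝓜)ᵒᵖ ⥤ AddCommGrpCat.{v}) :=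
  preadditiveYoneda ⋙
    (Functor.whiskeringLeft _ _ _).obj (ObjectProperty.ι (fun X : C => X ∈ 𝓜)).op

/-- A contravariant additive functor `F` (an `M`-module) is finitely presented if it is
the cokernel of a morphism between representable functors, i.e. there are `A B : M`,
`h : A ⟶ B` and `π : Hom(−,B) ⟶ F` such that
`Hom(−,A) ⟶ Hom(−,B) ⟶ F ⟶ 0` is exact. -/
def FinPres {M : Type u'} [Category.{v'} M] [Preadditive M]
    (F : Mᵒᵖ ⥤ AddCommGrpCat.{v'}) : Prop :=
  ∃ (A B : M) (h : A ⟶ B) (π : preadditiveYoneda.obj B ⟶ F),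
    (∀ m : M, Function.Surjective (π.app (op m))) ∧
    (∀ (m : M) (x : (preadditiveYoneda.obj B).obj (op m)),
      π.app (op m) x = 0 ↔ ∃ y, (preadditiveYoneda.map h).app (op m) y = x)

/-- `mod M`: the category of finitely presented contravariant additive functors
`M → Ab`. -/
abbrev ModCat (M : Type u') [Category.{v'} M] [Preadditive M] :=
  ObjectProperty.FullSubcategory (fun F : Mᵒᵖ ⥤ AddCommGrpCat.{v'} => F.Additive ∧ FinPres F)

/-- The functor `X ↦ Hom_C(Ω(−), X)|_𝓜`. -/
def loopResYoneda (T : LeftTriangulated C) (𝓜 : Set C) :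
    C ⥤ ((Subcat 𝓜)ᵒᵖ ⥤ AddCommGrpCat.{v}) :=
  preadditiveYoneda ⋙
    (Functor.whiskeringLeft _ _ _).obj (ObjectProperty.ι (fun X : C => X ∈ 𝓜) ⋙ T.loop).op

/-- The natural transformation `Hom_𝓜(−, M1) ⟶ Hom_C(Ω(−), X)|_𝓜` induced by
`f : ΩM1 ⟶ X`, sending `a : m ⟶ M1` to `Ωa ≫ f`. -/
def presMap (T : LeftTriangulated C) (𝓜 : Set C) {M1 X : C} (f : T.loop.obj M1 ⟶ X) :
    (resYoneda 𝓜).obj M1 ⟶ (loopResYoneda T 𝓜).obj X where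
  app m := AddCommGrpCat.ofHom
    (AddMonoidHom.mk' (fun a => T.loop.map a ≫ f)
      (by
        haveI := T.loop_additive
        intro a b
        show T.loop.map (a + b) ≫ f = T.loop.map a ≫ f + T.loop.map b ≫ f
        erw [Functor.map_add, Preadditive.add_comp]))
  naturality := by
    intro m m' φ
    ext a
    show T.loop.map (φ.unop.hom ≫ a) ≫ f =
      T.loop.map φ.unop.hom ≫ T.loop.map a ≫ f
    erw [Functor.map_comp, Category.assoc]


/-- In any left triangle, the composite of the last two maps is zero. -/
lemma LeftTriangulated.comp_zero (T : LeftTriangulated C) {X Y Z : C}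
    (x : T.loop.obj Z ⟶ X) (y : X ⟶ Y) (z : Y ⟶ Z) (hT : T.IsTri x y z) :
    y ≫ z = 0 := by
  have t2 := T.ltr2 _ _ _ (T.ltr1_id Z)
  obtain ⟨φ, -, hφ2⟩ := T.ltr3 x y z _ _ _ z (𝟙 Z) hT t2 (by simp)
  simpa using hφ2

/-- Factorization lemma: a morphism into `Y` killed by `z` factors through `y`. -/
lemma LeftTriangulated.fac (T : LeftTriangulated C) {X Y Z W : C}
    (x : T.loop.obj Z ⟶ X) (y : X ⟶ Y) (z : Y ⟶ Z) (hT : T.IsTri x y z)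
    (α : W ⟶ Y) (hα : α ≫ z = 0) : ∃ β : W ⟶ X, β ≫ y = α := by
  obtain ⟨β, -, hβ⟩ := T.ltr3 _ _ _ x y z α (0 : (0 : C) ⟶ Z)
    (T.ltr1_id W) hT (by simp [hα])
  exact ⟨β, by simpa using hβ.symm⟩

/-- Let `C` be a left triangulated category and `𝓜` a rigid
subcategory on which `Ω` is fully faithful.  For any left triangle
`ΩM1 ⟶f X ⟶g M0 ⟶h M1` with `M0, M1 ∈ 𝓜`, the sequence
`Hom_𝓜(−,M0) ⟶ Hom_𝓜(−,M1) ⟶ H(X) ⟶ 0` is exact in `Mod 𝓜`, where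
`H(X) = Hom_C(Ω(−),X)|_𝓜`; in particular `H(X)` is finitely presented. -/
theorem stmt13 (T : LeftTriangulated C) (𝓜 : Set C)
    (rigid : ∀ ⦃m m' : C⦄, m ∈ 𝓜 → m' ∈ 𝓜 → ∀ φ : T.loop.obj m ⟶ m', φ = 0)
    (LC1 : ∀ ⦃m m' : C⦄, m ∈ 𝓜 → m' ∈ 𝓜 →
      Function.Bijective (fun φ : m ⟶ m' => T.loop.map φ))
    {X M0 M1 : C} (hM0 : M0 ∈ 𝓜) (hM1 : M1 ∈ 𝓜)
    (f : T.loop.obj M1 ⟶ X) (g : X ⟶ M0) (h : M0 ⟶ M1) (hT : T.IsTri f g h) :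
    (∀ m : Subcat 𝓜, Function.Surjective ((presMap T 𝓜 f).app (op m))) ∧
    (∀ (m : Subcat 𝓜) (x : ((resYoneda 𝓜).obj M1).obj (op m)),
      (presMap T 𝓜 f).app (op m) x = 0 ↔
        ∃ y, ((resYoneda 𝓜).map h).app (op m) y = x) ∧
    FinPres ((loopResYoneda T 𝓜).obj X) := by
  haveI := T.loop_additive
  have rot : T.IsTri (-T.loop.map h) f g := T.ltr2 f g h hT
  have rot2 : T.IsTri (-T.loop.map g) (-T.loop.map h) f := T.ltr2 _ _ _ rot
  have hzero : T.loop.map h ≫ f = 0 := by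
    have := T.comp_zero _ _ _ rot2
    rw [Preadditive.neg_comp] at this
    exact neg_eq_zero.mp this
  have surj : ∀ m : Subcat 𝓜,
      Function.Surjective ((presMap T 𝓜 f).app (op m)) := by
    intro m α
    obtain ⟨β, hβ⟩ := T.fac _ _ _ rot α (rigid m.2 hM0 _)
    obtain ⟨a, ha⟩ := (LC1 m.2 hM1).surjective β
    refine ⟨a, ?_⟩
    show T.loop.map a ≫ f = α
    rw [show T.loop.map a = β from ha]; exact hβ
  have exa : ∀ (m : Subcat 𝓜) (x : ((resYoneda 𝓜).obj M1).obj (op m)),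
      (presMap T 𝓜 f).app (op m) x = 0 ↔
        ∃ y, ((resYoneda 𝓜).map h).app (op m) y = x := by
    intro m a
    constructor
    · intro h0
      have h0' : T.loop.map a ≫ f = 0 := h0
      obtain ⟨β, hβ⟩ := T.fac _ _ _ rot2 (T.loop.map a) h0'
      obtain ⟨b, hb⟩ := (LC1 m.2 hM0).surjective β
      refine ⟨-b, ?_⟩
      show (-b) ≫ h = a
      apply (LC1 m.2 hM1).injective
      show T.loop.map ((-b) ≫ h) = T.loop.map a
      rw [Functor.map_comp, Functor.map_neg, Preadditive.neg_comp,
        ← Preadditive.comp_neg]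
      rw [show T.loop.map b = β from hb]
      exact hβ
    · rintro ⟨y, rfl⟩
      show T.loop.map (y ≫ h) ≫ f = 0
      erw [Functor.map_comp, Category.assoc, hzero, Limits.comp_zero]
  refine ⟨surj, exa, ⟨⟨M0, hM0⟩, ⟨M1, hM1⟩, ObjectProperty.homMk h,
    { app := fun m => AddCommGrpCat.ofHom (AddMonoidHom.mk' (fun a => a.hom) (fun _ _ => rfl)),
      naturality := fun _ _ _ => rfl } ≫ presMap T 𝓜 f, ?_, ?_⟩⟩
  · intro m α
    obtain ⟨a, ha⟩ := surj m α
    exact ⟨ObjectProperty.homMk a, ha⟩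
  · intro m x
    refine (exa m x.hom).trans ?_
    constructor
    · rintro ⟨y, hy⟩
      exact ⟨ObjectProperty.homMk y, InducedCategory.Hom.ext hy⟩
    · rintro ⟨y, rfl⟩
      exact ⟨y.hom, rfl⟩
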